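/- Let n, m, T be positive integers with T ≥ n, let A ∈ ℝ^{n×n} and B ∈ ℝ^{n×m} satisfy the controllability condition rank [B, AB, …, A^{n−1}B] = n, let Q ∈ ℝ^{n×n} be positive semi-definite and R ∈ ℝ^{m×m} positive definite. Suppose ν ≥ 0, p_t ∈ ℝⁿ (t = 0,…,T−1), x*_t ∈ ℝⁿ (t = 0,…,T) and u*_t ∈ ℝᵐ (t = 0,…,T−1) satisfy: x*_{t+1} = A x*_t + B u*_t for t = 0,…,T−1; the adjoint recursion p_{t−1} = Aᵀ p_t − ν Q x*_t for t = 1,…,T−1; the stationarity condition ν R u*_t = Bᵀ p_t for t = 0,…,T−1; and the non-triviality condition that ν and the vectors p_0,…,p_{T−1} do not simultaneously vanish. Then ν > 0; i.e., every optimal state-action trajectory of the fixed-endpoint linear-quadratic state-transfer problem is normal (no abnormal extremal lifts exist). -/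

import Mathlib

open Matrix

noncomputable section

/-- The controllability (Kalman) matrix `[B, AB, …, A^{n-1}B]`. -/
def kalmanMatrix (n m : ℕ) (A : Matrix (Fin n) (Fin n) ℝ)
    (B : Matrix (Fin n) (Fin m) ℝ) : Matrix (Fin n) (Fin n × Fin m) ℝ :=
  fun i kj => (A ^ (kj.1 : ℕ) * B) i kj.2

/-- Normality of the fixed-endpoint LQ state-transfer problem: every extremal
lift produced by the PMP has a strictly positive cost multiplier. -/
theorem stmt3
    (n m T : ℕ) (hn : 0 < n) (hm : 0 < m) (hT : 0 < T) (hTn : n ≤ T)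
    (A : Matrix (Fin n) (Fin n) ℝ) (B : Matrix (Fin n) (Fin m) ℝ)
    (hctrb : (kalmanMatrix n m A B).rank = n)
    (Q : Matrix (Fin n) (Fin n) ℝ) (hQ : Q.PosSemidef)
    (R : Matrix (Fin m) (Fin m) ℝ) (hR : R.PosDef)
    (ν : ℝ) (hν : 0 ≤ ν)
    (p xs : ℕ → Fin n → ℝ) (us : ℕ → Fin m → ℝ)
    (hdyn : ∀ t < T, xs (t + 1) = A.mulVec (xs t) + B.mulVec (us t))
    (hadj : ∀ t, 1 ≤ t → t < T →
      p (t - 1) = Aᵀ.mulVec (p t) - ν • Q.mulVec (xs t))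
    (hstat : ∀ t < T, ν • R.mulVec (us t) = Bᵀ.mulVec (p t))
    (hnontriv : ¬ (ν = 0 ∧ ∀ t < T, p t = 0)) :
    0 < ν := by
  rcases lt_or_eq_of_le hν with h | h
  · exact h
  exfalso
  have hν0 : ν = 0 := h.symm
  apply hnontriv
  refine ⟨hν0, ?_⟩
  have hB : ∀ t < T, Bᵀ.mulVec (p t) = 0 := by
    intro t ht
    have := hstat t ht
    rw [hν0, zero_smul] at this
    exact this.symm
  have hadj' : ∀ t, 1 ≤ t → t < T → p (t - 1) = Aᵀ.mulVec (p t) := by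
    intro t h1 h2
    rw [hadj t h1 h2, hν0, zero_smul, sub_zero]
  set q : Fin n → ℝ := p (T - 1) with hq
  have key : ∀ s, s < T → p (T - 1 - s) = ((Aᵀ) ^ s).mulVec q := by
    intro s
    induction s with
    | zero => simp [hq]
    | succ s ih =>
      intro hs
      have hs' : s < T := Nat.lt_of_succ_lt hs
      have heq : T - 1 - (s + 1) = (T - 1 - s) - 1 := by omega
      rw [heq, hadj' (T - 1 - s) (by omega) (by omega), ih hs',
        Matrix.mulVec_mulVec, ← pow_succ']
  have hBk : ∀ k < T, Bᵀ.mulVec (((Aᵀ) ^ k).mulVec q) = 0 := by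
    intro k hk
    rw [← key k hk]
    exact hB _ (by omega)
  have hKq : (kalmanMatrix n m A B)ᵀ.mulVec q = 0 := by
    funext kj
    obtain ⟨k, j⟩ := kj
    have h1 := congrFun (hBk k (lt_of_lt_of_le k.isLt hTn)) j
    rw [Matrix.mulVec_mulVec] at h1
    have h2 : (Bᵀ * (Aᵀ) ^ (k : ℕ)) = ((A ^ (k : ℕ)) * B)ᵀ := by
      rw [Matrix.transpose_mul, Matrix.transpose_pow]
    rw [h2] at h1
    simpa [kalmanMatrix, Matrix.mulVec, Matrix.transpose_apply, dotProduct]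
      using h1
  -- injectivity of mulVec of the transpose from rank = n
  have hrt : (kalmanMatrix n m A B)ᵀ.rank = n := by
    rw [Matrix.rank_transpose]; exact hctrb
  have hq0 : q = 0 := by
    have hrn := LinearMap.finrank_range_add_finrank_ker
      ((kalmanMatrix n m A B)ᵀ.mulVecLin)
    have hdom : Module.finrank ℝ (Fin n → ℝ) = n := by
      simp [Module.finrank_pi]
    rw [hdom] at hrn
    have hrank : Module.finrank ℝ
        (LinearMap.range ((kalmanMatrix n m A B)ᵀ.mulVecLin)) = n := hrt
    have hker0 : Module.finrank ℝ
        (LinearMap.ker ((kalmanMatrix n m A B)ᵀ.mulVecLin)) = 0 := by omega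
    have hker : LinearMap.ker ((kalmanMatrix n m A B)ᵀ.mulVecLin) = ⊥ :=
      Submodule.finrank_eq_zero.mp hker0
    have hmem : q ∈ LinearMap.ker ((kalmanMatrix n m A B)ᵀ.mulVecLin) := by
      exact LinearMap.mem_ker.mpr hKq
    rw [hker] at hmem
    simpa using hmem
  intro t ht
  have h1 : T - 1 - (T - 1 - t) = t := by omega
  have := key (T - 1 - t) (by omega)
  rw [h1, hq0, Matrix.mulVec_zero] at this
  exact this
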